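/- Let A, A' ∈ ℝ^{d×m} and let k be a positive integer with 2k ≤ m and Spark(A) > 2k. Let 𝒮 denote the collection of all k-element subsets of {1,…,m}. If there exists a mapping π : 𝒮 → 𝒮 such that span{A_S} = span{A'_{π(S)}} for every S ∈ 𝒮 (where A_S is the submatrix of the columns of A indexed by S), then there exist a permutation matrix P ∈ ℝ^{m×m} and an invertible diagonal matrix D ∈ ℝ^{m×m} such that A' = A P D. -/

import Mathlib

/-- Lemma 1 of [r4]: if `Spark(A) > 2k` and there is a map `π` on
`k`-element subsets of `{1,…,m}` with `span{A_S} = span{A'_{π(S)}}` for every such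
subset `S`, then `A' = A P D` for a permutation matrix `P` and an invertible
diagonal matrix `D`. -/
theorem stmt6 (d m k : ℕ) (hd : 0 < d) (hm : 0 < m) (hk : 0 < k) (hkm : 2 * k ≤ m)
    (A A' : Matrix (Fin d) (Fin m) ℝ)
    (hA : ∀ T : Finset (Fin m), T.card ≤ 2 * k →
      LinearIndependent ℝ (fun j : T => fun i => A i (j : Fin m)))
    (π : {S : Finset (Fin m) // S.card = k} → {S : Finset (Fin m) // S.card = k})
    (hπ : ∀ S : {S : Finset (Fin m) // S.card = k},
      Submodule.span ℝ ((fun j => fun i => A i j) '' (S.1 : Set (Fin m)))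
        = Submodule.span ℝ ((fun j => fun i => A' i j) '' ((π S).1 : Set (Fin m)))) :
    ∃ (P : Equiv.Perm (Fin m)) (D : Fin m → ℝ), (∀ i, D i ≠ 0) ∧
      A' = A * ((Equiv.toPEquiv P).toMatrix : Matrix (Fin m) (Fin m) ℝ) * Matrix.diagonal D := by
  classical
  set V := Fin d → ℝ
  set colA : Fin m → V := fun j => fun i => A i j with hcolA
  set colA' : Fin m → V := fun j => fun i => A' i j with hcolA'
  set spanA : Finset (Fin m) → Submodule ℝ V :=
    fun S => Submodule.span ℝ (colA '' (S : Set (Fin m))) with hspanA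
  -- rank of spans of A-columns
  have hrank : ∀ S : Finset (Fin m), S.card ≤ 2*k → Module.finrank ℝ (spanA S) = S.card := by
    intro S hS
    have h1 : colA '' (S : Set (Fin m)) = Set.range (fun j : (S : Set (Fin m)) => colA j) :=
      Set.image_eq_range _ _
    have h3 : LinearIndependent ℝ (fun j : (S : Set (Fin m)) => colA j) := hA S hS
    rw [hspanA]
    simp only []
    show Module.finrank ℝ (Submodule.span ℝ (colA '' (S : Set (Fin m)))) = S.card
    rw [h1, finrank_span_eq_card h3]
    simp
  -- span of union is sup
  have hsup : ∀ S S' : Finset (Fin m), spanA S ⊔ spanA S' = spanA (S ∪ S') := by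
    intro S S'
    rw [hspanA]
    simp only []
    rw [Finset.coe_union, Set.image_union, Submodule.span_union]
  have hmono : ∀ S S' : Finset (Fin m), S ⊆ S' → spanA S ≤ spanA S' := by
    intro S S' h
    exact Submodule.span_mono (Set.image_mono (by exact_mod_cast h))
  -- intersection lemma
  have hinter : ∀ S S' : Finset (Fin m), S.card ≤ k → S'.card ≤ k →
      ∀ v : V, v ∈ spanA S → v ∈ spanA S' → v ∈ spanA (S ∩ S') := by
    intro S S' hS hS' v hv hv'
    have hle : spanA (S ∩ S') ≤ spanA S ⊓ spanA S' :=
      le_inf (hmono _ _ Finset.inter_subset_left) (hmono _ _ Finset.inter_subset_right)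
    have hcard : (S ∪ S').card + (S ∩ S').card = S.card + S'.card :=
      Finset.card_union_add_card_inter S S'
    have hu2 : (S ∪ S').card ≤ 2 * k := by
      have := Finset.card_union_le S S'; omega
    have h1 := hrank S (by omega)
    have h2 := hrank S' (by omega)
    have h3 := hrank (S ∪ S') hu2
    have h4 := hrank (S ∩ S') (by have : (S ∩ S').card ≤ S.card := Finset.card_le_card Finset.inter_subset_left; omega)
    have h5 := Submodule.finrank_sup_add_finrank_inf_eq (spanA S) (spanA S')
    rw [hsup] at h5
    have heq : spanA (S ∩ S') = spanA S ⊓ spanA S' := by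
      apply Submodule.eq_of_le_of_finrank_le hle
      omega
    rw [heq]; exact ⟨hv, hv'⟩
  -- spans determine the set
  have hsetdet : ∀ S S' : Finset (Fin m), S.card = k → S'.card = k →
      spanA S = spanA S' → S = S' := by
    intro S S' hS hS' h
    have h1 : spanA (S ∪ S') = spanA S := by
      rw [← hsup, h, sup_idem]
    have hu2 : (S ∪ S').card ≤ 2 * k := by
      have := Finset.card_union_le S S'; omega
    have h2 := hrank (S ∪ S') hu2
    have h3 := hrank S (by omega)
    rw [h1, h3] at h2
    have hsub : S = S ∪ S' :=
      Finset.eq_of_subset_of_card_le Finset.subset_union_left (by omega)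
    have : S' ⊆ S := Finset.union_eq_left.mp hsub.symm
    exact (Finset.eq_of_subset_of_card_le this (by omega)).symm
  -- π is injective, hence bijective
  have hπinj : Function.Injective π := by
    intro S S' h
    have h1 : spanA S.1 = spanA S'.1 := by
      rw [hspanA]; simp only []
      rw [hπ S, hπ S', h]
    exact Subtype.ext (hsetdet _ _ S.2 S'.2 h1)
  have hπbij : Function.Bijective π := Finite.injective_iff_bijective.mp hπinj
  -- every index is in some k-set
  have hksub : ∀ u : Fin m, ∃ T : Finset (Fin m), u ∈ T ∧ T.card = k := by
    intro u
    obtain ⟨T, hT1, _, hT3⟩ := Finset.exists_subsuperset_card_eq (n := k)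
      (Finset.subset_univ {u}) (by rw [Finset.card_singleton]; omega) (by simp; omega)
    exact ⟨T, hT1 (Finset.mem_singleton_self u), hT3⟩
  -- membership of A'-columns in A-spans
  have hmem : ∀ (u : Fin m) (S : {S : Finset (Fin m) // S.card = k}),
      u ∈ (π S).1 → colA' u ∈ spanA S.1 := by
    intro u S hu
    rw [hspanA]; simp only []
    rw [hπ S]
    exact Submodule.subset_span ⟨u, hu, rfl⟩
  -- A'-columns are nonzero
  have hA'ne : ∀ u : Fin m, colA' u ≠ 0 := by
    intro u hu0
    obtain ⟨T, huT, hTk⟩ := hksub u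
    obtain ⟨S, hS⟩ := hπbij.2 ⟨T, hTk⟩
    have hsp : Submodule.span ℝ (colA' '' (T : Set (Fin m))) = spanA S.1 := by
      rw [hspanA]; simp only []
      rw [hπ S, hS]
    have hle : Submodule.span ℝ (colA' '' (T : Set (Fin m)))
        ≤ Submodule.span ℝ (colA' '' ((T.erase u : Finset (Fin m)) : Set (Fin m))) := by
      rw [Submodule.span_le]
      rintro x ⟨j, hj, rfl⟩
      by_cases hju : j = u
      · rw [hju, hu0]; exact Submodule.zero_mem _
      · exact Submodule.subset_span ⟨j, by simp [Finset.mem_erase, hju, hj], rfl⟩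
    have hfr1 : Module.finrank ℝ (Submodule.span ℝ (colA' '' (T : Set (Fin m)))) = k := by
      rw [hsp, hrank S.1 (by rw [S.2]; omega), S.2]
    have hfr2 : Module.finrank ℝ (Submodule.span ℝ
        (colA' '' ((T.erase u : Finset (Fin m)) : Set (Fin m)))) ≤ k - 1 := by
      have himg : colA' '' ((T.erase u : Finset (Fin m)) : Set (Fin m))
          = (((T.erase u).image colA' : Finset V) : Set V) := by
        rw [Finset.coe_image]
      rw [himg]
      calc Module.finrank ℝ (Submodule.span ℝ (((T.erase u).image colA' : Finset V) : Set V))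
          ≤ ((T.erase u).image colA').card := finrank_span_finset_le_card _
        _ ≤ (T.erase u).card := Finset.card_image_le
        _ = k - 1 := by rw [Finset.card_erase_of_mem huT, hTk]
    have := Submodule.finrank_mono hle
    omega
  -- the intersection sets E u
  set E : Fin m → Finset (Fin m) := fun u => Finset.univ.filter
    (fun t => ∀ S : {S : Finset (Fin m) // S.card = k}, u ∈ (π S).1 → t ∈ S.1) with hE
  -- colA' u lies in spanA (E u)
  have hmemE : ∀ u : Fin m, colA' u ∈ spanA (E u) := by
    intro u
    set 𝔖 : Finset {S : Finset (Fin m) // S.card = k} :=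
      Finset.univ.filter (fun S => u ∈ (π S).1) with h𝔖
    have h𝔖ne : 𝔖.Nonempty := by
      obtain ⟨T, huT, hTk⟩ := hksub u
      obtain ⟨S, hS⟩ := hπbij.2 ⟨T, hTk⟩
      exact ⟨S, by simp [h𝔖, hS, huT]⟩
    have key : ∀ 𝔗 : Finset {S : Finset (Fin m) // S.card = k}, 𝔗.Nonempty →
        (∀ S ∈ 𝔗, colA' u ∈ spanA S.1) →
        ∃ C : Finset (Fin m), C.card ≤ k ∧ (∀ S ∈ 𝔗, C ⊆ S.1) ∧ colA' u ∈ spanA C := by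
      intro 𝔗 h𝔗
      induction h𝔗 using Finset.Nonempty.cons_induction with
      | singleton S =>
        intro hmem'
        exact ⟨S.1, S.2.le, by simp, hmem' S (Finset.mem_singleton_self S)⟩
      | cons S 𝔗' hS h𝔗' ih =>
        intro hmem'
        obtain ⟨C, hC1, hC2, hC3⟩ := ih (fun S' hS' => hmem' S' (Finset.mem_cons_of_mem hS'))
        refine ⟨S.1 ∩ C, ?_, ?_, ?_⟩
        · have : (S.1 ∩ C).card ≤ S.1.card := Finset.card_le_card Finset.inter_subset_left
          rw [S.2] at this; exact this
        · intro S' hS'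
          rcases Finset.mem_cons.mp hS' with h | h
          · subst h; exact Finset.inter_subset_left
          · exact Finset.inter_subset_right.trans (hC2 S' h)
        · exact hinter S.1 C S.2.le hC1 _ (hmem' S (Finset.mem_cons_self _ _)) hC3
    obtain ⟨C, hC1, hC2, hC3⟩ := key 𝔖 h𝔖ne
      (fun S hS => hmem u S (by simpa [h𝔖] using hS))
    have hCE : C ⊆ E u := by
      intro t ht
      rw [hE]
      simp only [Finset.mem_filter, Finset.mem_univ, true_and]
      intro S hS
      exact hC2 S (by simp [h𝔖, hS]) ht
    exact hmono C (E u) hCE hC3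
  -- E u is nonempty
  have hEne : ∀ u : Fin m, (E u).Nonempty := by
    intro u
    rcases Finset.eq_empty_or_nonempty (E u) with h | h
    · exfalso
      have := hmemE u
      rw [h] at this
      rw [hspanA] at this
      simp only [Finset.coe_empty, Set.image_empty, Submodule.span_empty,
        Submodule.mem_bot] at this
      exact hA'ne u this
    · exact h
  -- disjointness of the E u
  have hdisj : ∀ u u' : Fin m, u ≠ u' → ∀ t, t ∈ E u → t ∈ E u' → False := by
    intro u u' huu' t htu htu'
    rw [hE] at htu htu'
    simp only [Finset.mem_filter, Finset.mem_univ, true_and] at htu htu'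
    -- injection from k-subsets avoiding t into k-subsets avoiding u, u'
    set s1 : Finset (Finset (Fin m)) := Finset.powersetCard k (Finset.univ.erase t) with hs1
    set s2 : Finset (Finset (Fin m)) := Finset.powersetCard k (Finset.univ \ {u, u'}) with hs2
    set f : Finset (Fin m) → Finset (Fin m) :=
      fun S => if h : S.card = k then (π ⟨S, h⟩).1 else ∅ with hf
    have hmaps : ∀ S ∈ s1, f S ∈ s2 := by
      intro S hS
      rw [hs1, Finset.mem_powersetCard] at hS
      obtain ⟨hSsub, hSk⟩ := hS
      rw [hf]
      simp only [hSk, dif_pos]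
      rw [hs2, Finset.mem_powersetCard]
      refine ⟨?_, (π ⟨S, hSk⟩).2⟩
      intro x hx
      rw [Finset.mem_sdiff]
      refine ⟨Finset.mem_univ x, ?_⟩
      intro hx2
      rcases Finset.mem_insert.mp hx2 with rfl | hx2
      · have := htu ⟨S, hSk⟩ hx
        have := hSsub this
        exact (Finset.mem_erase.mp this).1 rfl
      · rw [Finset.mem_singleton] at hx2
        subst hx2
        have := htu' ⟨S, hSk⟩ hx
        have := hSsub this
        exact (Finset.mem_erase.mp this).1 rfl
    have hinj : Set.InjOn f s1 := by
      intro S hS S' hS' hff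
      rw [Finset.mem_coe, hs1, Finset.mem_powersetCard] at hS hS'
      rw [hf] at hff
      simp only [hS.2, hS'.2, dif_pos] at hff
      have := hπinj (Subtype.ext hff : π ⟨S, hS.2⟩ = π ⟨S', hS'.2⟩)
      exact congrArg Subtype.val this
    have hcardle := Finset.card_le_card_of_injOn f hmaps hinj
    have hc1 : s1.card = (m - 1).choose k := by
      rw [hs1, Finset.card_powersetCard, Finset.card_erase_of_mem (Finset.mem_univ t)]
      simp
    have hc2 : s2.card = (m - 2).choose k := by
      rw [hs2, Finset.card_powersetCard, Finset.card_sdiff_of_subset (Finset.subset_univ _)]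
      have : ({u, u'} : Finset (Fin m)).card = 2 := Finset.card_pair huu'
      rw [this]
      simp
    rw [hc1, hc2] at hcardle
    -- contradiction via Pascal
    obtain ⟨k', rfl⟩ : ∃ k', k = k' + 1 := ⟨k - 1, by omega⟩
    have hm1 : m - 1 = (m - 2) + 1 := by omega
    rw [hm1, Nat.choose_succ_succ'] at hcardle
    have hpos : 0 < (m - 2).choose k' := Nat.choose_pos (by omega)
    omega
  -- E u is a singleton
  have hcard1 : ∀ u : Fin m, (E u).card = 1 := by
    have hdisj' : ∀ u ∈ (Finset.univ : Finset (Fin m)), ∀ u' ∈ Finset.univ, u ≠ u' →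
        Disjoint (E u) (E u') := by
      intro u _ u' _ h
      rw [Finset.disjoint_left]
      intro t ht ht'
      exact hdisj u u' h t ht ht'
    have hbu : (Finset.univ.biUnion E).card = ∑ u : Fin m, (E u).card :=
      Finset.card_biUnion hdisj'
    have hle : (Finset.univ.biUnion E).card ≤ m := by
      calc (Finset.univ.biUnion E).card ≤ (Finset.univ : Finset (Fin m)).card :=
          Finset.card_le_card (Finset.subset_univ _)
        _ = m := by simp
    have hge : ∀ u : Fin m, 1 ≤ (E u).card := fun u => Finset.card_pos.mpr (hEne u)
    by_contra hcon
    push_neg at hcon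
    obtain ⟨u0, hu0⟩ := hcon
    have h2 : 1 < (E u0).card := lt_of_le_of_ne (hge u0) (Ne.symm hu0)
    have : ∑ _u : Fin m, 1 < ∑ u : Fin m, (E u).card := by
      apply Finset.sum_lt_sum (fun u _ => hge u) ⟨u0, Finset.mem_univ u0, h2⟩
    simp only [Finset.sum_const, Finset.card_univ, Fintype.card_fin, smul_eq_mul, mul_one] at this
    omega
  choose τ hτ using fun u => Finset.card_eq_one.mp (hcard1 u)
  have hτinj : Function.Injective τ := by
    intro u u' h
    by_contra hne
    exact hdisj u u' hne (τ u) (by rw [hτ u]; exact Finset.mem_singleton_self _)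
      (by rw [hτ u', h]; exact Finset.mem_singleton_self _)
  have hτbij : Function.Bijective τ := Finite.injective_iff_bijective.mp hτinj
  -- coefficients
  have hcoef : ∀ u : Fin m, ∃ c : ℝ, c ≠ 0 ∧ colA' u = c • colA (τ u) := by
    intro u
    have h1 : colA' u ∈ spanA {τ u} := by
      have := hmemE u
      rwa [hτ u] at this
    rw [hspanA] at h1
    simp only [Finset.coe_singleton, Set.image_singleton] at h1
    rw [Submodule.mem_span_singleton] at h1
    obtain ⟨c, hc⟩ := h1
    refine ⟨c, ?_, hc.symm⟩
    intro hc0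
    apply hA'ne u
    rw [← hc, hc0, zero_smul]
  choose c hc0 hc using hcoef
  refine ⟨(Equiv.ofBijective τ hτbij).symm, c, hc0, ?_⟩
  rw [PEquiv.mul_toMatrix_toPEquiv]
  ext i u
  rw [Matrix.mul_diagonal, Matrix.submatrix_apply, id_eq, Equiv.symm_symm,
    Equiv.ofBijective_apply]
  have := congrFun (hc u) i
  rw [hcolA', hcolA] at this
  simp only [Pi.smul_apply, smul_eq_mul] at this
  rw [this, mul_comm]
  rfl
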